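/- arXiv:1106.4979 — 5 statements merged into one kernel-verified Lean document; each statement's English description precedes it below -/
import Mathlib

section
/- Let V be a real inner product space of dimension n ≥ 3 with unit vector X₁, and let K : V × V → V be a symmetric bilinear map that is invariant under every rotation fixing X₁, such that for each X the map Y ↦ K(X,Y) is traceless and h-symmetric (h(K(X,Y),Z) = h(K(X,Z),Y)). Then there exists r ∈ ℝ such that K(X₁,X₁) = (n−1)r X₁, K(X₁, X) = −r X for X ⊥ X₁, and K(X,Y) = −r h(X,Y) X₁ for X, Y ⊥ X₁. -/
open scoped RealInnerProductSpace
open Module Submodule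

section helpers

variable {E : Type*} [NormedAddCommGroup E] [InnerProductSpace ℝ E] [FiniteDimensional ℝ E]

private lemma refl2_det (v w : E) (hv : v ≠ 0) (hw : w ≠ 0) :
    LinearMap.det ((((reflection (ℝ ∙ v)ᗮ).trans (reflection (ℝ ∙ w)ᗮ)).toLinearEquiv :
      E ≃ₗ[ℝ] E) : E →ₗ[ℝ] E) = 1 := by
  have h : ((((reflection (ℝ ∙ v)ᗮ).trans (reflection (ℝ ∙ w)ᗮ)).toLinearEquiv :
      E ≃ₗ[ℝ] E) : E →ₗ[ℝ] E)
      = ((reflection (ℝ ∙ w)ᗮ).toLinearEquiv : E →ₗ[ℝ] E) ∘ₗ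
        ((reflection (ℝ ∙ v)ᗮ).toLinearEquiv : E →ₗ[ℝ] E) := rfl
  rw [h, LinearMap.det_comp]
  have dv : LinearMap.det ((reflection (ℝ ∙ v)ᗮ).toLinearEquiv : E →ₗ[ℝ] E) = -1 := by
    have := det_reflection (𝕜 := ℝ) (ℝ ∙ v)ᗮ
    rwa [Submodule.orthogonal_orthogonal, finrank_span_singleton hv, pow_one] at this
  have dw : LinearMap.det ((reflection (ℝ ∙ w)ᗮ).toLinearEquiv : E →ₗ[ℝ] E) = -1 := by
    have := det_reflection (𝕜 := ℝ) (ℝ ∙ w)ᗮ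
    rwa [Submodule.orthogonal_orthogonal, finrank_span_singleton hw, pow_one] at this
  rw [dv, dw]; ring

private lemma exists_neg_iso (X₁ b c : E) (hb : b ≠ 0) (hc : c ≠ 0) (hbc : ⟪b, c⟫ = 0)
    (h1b : ⟪X₁, b⟫ = 0) (h1c : ⟪X₁, c⟫ = 0) :
    ∃ g : E ≃ₗᵢ[ℝ] E, LinearMap.det ((g.toLinearEquiv : E ≃ₗ[ℝ] E) : E →ₗ[ℝ] E) = 1 ∧
      g X₁ = X₁ ∧ g b = -b ∧ g c = -c := by
  refine ⟨(reflection (ℝ ∙ b)ᗮ).trans (reflection (ℝ ∙ c)ᗮ), refl2_det b c hb hc, ?_, ?_, ?_⟩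
  · rw [LinearIsometryEquiv.trans_apply,
      reflection_mem_subspace_eq_self (Submodule.mem_orthogonal_singleton_iff_inner_left.mpr h1b),
      reflection_mem_subspace_eq_self (Submodule.mem_orthogonal_singleton_iff_inner_left.mpr h1c)]
  · rw [LinearIsometryEquiv.trans_apply, reflection_orthogonalComplement_singleton_eq_neg,
      map_neg,
      reflection_mem_subspace_eq_self (Submodule.mem_orthogonal_singleton_iff_inner_left.mpr hbc)]
  · rw [LinearIsometryEquiv.trans_apply,
      reflection_mem_subspace_eq_self (Submodule.mem_orthogonal_singleton_iff_inner_right.mpr hbc),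
      reflection_orthogonalComplement_singleton_eq_neg]

private lemma exists_rot_iso (X₁ u v w : E) (huv : ‖u‖ = ‖v‖) (hne : u ≠ v) (hw : w ≠ 0)
    (h1uv : ⟪X₁, u - v⟫ = 0) (h1w : ⟪X₁, w⟫ = 0) (hvw : ⟪v, w⟫ = 0) :
    ∃ g : E ≃ₗᵢ[ℝ] E, LinearMap.det ((g.toLinearEquiv : E ≃ₗ[ℝ] E) : E →ₗ[ℝ] E) = 1 ∧
      g X₁ = X₁ ∧ g u = v := by
  refine ⟨(reflection (ℝ ∙ (u - v))ᗮ).trans (reflection (ℝ ∙ w)ᗮ),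
    refl2_det _ _ (sub_ne_zero.mpr hne) hw, ?_, ?_⟩
  · rw [LinearIsometryEquiv.trans_apply,
      reflection_mem_subspace_eq_self (Submodule.mem_orthogonal_singleton_iff_inner_left.mpr h1uv),
      reflection_mem_subspace_eq_self (Submodule.mem_orthogonal_singleton_iff_inner_left.mpr h1w)]
  · rw [LinearIsometryEquiv.trans_apply, reflection_sub huv,
      reflection_mem_subspace_eq_self (Submodule.mem_orthogonal_singleton_iff_inner_left.mpr hvw)]

end helpers

set_option maxHeartbeats 1000000 in
/-- A traceless, h-symmetric, symmetric bilinear map `K` on `ℝⁿ`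
(n ≥ 3) invariant under all rotations fixing the unit vector `X₁` has the
canonical `SO(n−1)`-symmetric form determined by a single number `r`. -/
theorem stmt2 (n : ℕ) (hn : 3 ≤ n)
    (X₁ : EuclideanSpace ℝ (Fin n)) (hX₁ : ‖X₁‖ = 1)
    (K : EuclideanSpace ℝ (Fin n) →ₗ[ℝ] EuclideanSpace ℝ (Fin n) →ₗ[ℝ]
      EuclideanSpace ℝ (Fin n))
    (hKsym : ∀ X Y, K X Y = K Y X)
    (hKtraceless : ∀ X, LinearMap.trace ℝ (EuclideanSpace ℝ (Fin n)) (K X) = 0)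
    (hKhsym : ∀ X Y Z, ⟪K X Y, Z⟫ = ⟪K X Z, Y⟫)
    (hequiv : ∀ g : EuclideanSpace ℝ (Fin n) ≃ₗᵢ[ℝ] EuclideanSpace ℝ (Fin n),
      LinearMap.det (g.toLinearEquiv : EuclideanSpace ℝ (Fin n) →ₗ[ℝ]
        EuclideanSpace ℝ (Fin n)) = 1 → g X₁ = X₁ →
      ∀ X Y, K (g X) (g Y) = g (K X Y)) :
    ∃ r : ℝ, K X₁ X₁ = (((n : ℝ) - 1) * r) • X₁ ∧
      (∀ X, ⟪X, X₁⟫ = 0 → K X₁ X = (-r) • X) ∧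
      (∀ X Y, ⟪X, X₁⟫ = 0 → ⟪Y, X₁⟫ = 0 → K X Y = (-r * ⟪X, Y⟫) • X₁) := by
  haveI : NeZero n := ⟨by omega⟩
  -- invariance of the trilinear form
  have hinv : ∀ g : EuclideanSpace ℝ (Fin n) ≃ₗᵢ[ℝ] EuclideanSpace ℝ (Fin n),
      LinearMap.det ((g.toLinearEquiv : EuclideanSpace ℝ (Fin n) ≃ₗ[ℝ] EuclideanSpace ℝ (Fin n)) : EuclideanSpace ℝ (Fin n) →ₗ[ℝ] EuclideanSpace ℝ (Fin n)) = 1 → g X₁ = X₁ →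
      ∀ x y z, ⟪K (g x) (g y), g z⟫ = ⟪K x y, z⟫ := by
    intro g hdet hfix x y z
    rw [hequiv g hdet hfix, LinearIsometryEquiv.inner_map_map]
  -- existence of a nonzero vector orthogonal to two given vectors
  have hperp : ∀ x y : EuclideanSpace ℝ (Fin n), ∃ w : EuclideanSpace ℝ (Fin n), w ≠ 0 ∧ ⟪x, w⟫ = 0 ∧ ⟪y, w⟫ = 0 := by
    intro x y
    have hsr : ∀ z : EuclideanSpace ℝ (Fin n), finrank ℝ (ℝ ∙ z : Submodule ℝ (EuclideanSpace ℝ (Fin n))) ≤ 1 := by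
      intro z
      by_cases hz : z = 0
      · subst hz
        rw [Submodule.span_zero_singleton, finrank_bot]
        norm_num
      · rw [finrank_span_singleton hz]
    have hsup : finrank ℝ ((ℝ ∙ x) ⊔ (ℝ ∙ y) : Submodule ℝ (EuclideanSpace ℝ (Fin n))) ≤ 2 := by
      have h := Submodule.finrank_sup_add_finrank_inf_eq (ℝ ∙ x) (ℝ ∙ y)
      have := hsr x; have := hsr y; omega
    have htot := Submodule.finrank_add_finrank_orthogonal (K := (ℝ ∙ x) ⊔ (ℝ ∙ y))
    have hdim : finrank ℝ (EuclideanSpace ℝ (Fin n)) = n := finrank_euclideanSpace_fin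
    have hne : ((ℝ ∙ x) ⊔ (ℝ ∙ y) : Submodule ℝ (EuclideanSpace ℝ (Fin n)))ᗮ ≠ ⊥ := by
      intro hbot
      rw [hbot, finrank_bot, hdim] at htot
      omega
    obtain ⟨w, hwm, hw0⟩ := Submodule.exists_mem_ne_zero_of_ne_bot hne
    refine ⟨w, hw0, ?_, ?_⟩
    · exact hwm x (Submodule.mem_sup_left (Submodule.mem_span_singleton_self x))
    · exact hwm y (Submodule.mem_sup_right (Submodule.mem_span_singleton_self y))
  have hX11 : ⟪X₁, X₁⟫ = 1 := by
    rw [real_inner_self_eq_norm_sq, hX₁]; norm_num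
  -- extensionality via inner products
  have hext : ∀ v : EuclideanSpace ℝ (Fin n), (∀ Z, ⟪Z, X₁⟫ = 0 → ⟪v, Z⟫ = 0) → ⟪v, X₁⟫ = 0 → v = 0 := by
    intro v h hz
    rw [← @inner_self_eq_zero ℝ]
    have hv' : ⟪v - ⟪v, X₁⟫ • X₁, X₁⟫ = 0 := by
      rw [inner_sub_left, real_inner_smul_left, hX11]; ring
    have h2 := h (v - ⟪v, X₁⟫ • X₁) hv'
    rw [inner_sub_right, real_inner_smul_right, hz] at h2
    linarith
  -- Step A : ⟪K X₁ X₁, w⟫ = 0 for w ⊥ X₁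
  have hA : ∀ w : EuclideanSpace ℝ (Fin n), ⟪w, X₁⟫ = 0 → ⟪K X₁ X₁, w⟫ = 0 := by
    intro w hw
    by_cases hw0 : w = 0
    · simp [hw0]
    obtain ⟨c, hc0, hcX, hcw⟩ := hperp X₁ w
    obtain ⟨g, hgd, hg1, hgb, -⟩ := exists_neg_iso X₁ w c hw0 hc0 hcw
      (real_inner_comm w X₁ ▸ hw) hcX
    have h := hinv g hgd hg1 X₁ X₁ w
    rw [hg1, hgb, inner_neg_right] at h
    linarith
  -- Step B : cubic vanishes on the orthogonal complement
  have hB : ∀ x : EuclideanSpace ℝ (Fin n), ⟪x, X₁⟫ = 0 → ⟪K x x, x⟫ = 0 := by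
    intro x hx
    by_cases hx0 : x = 0
    · simp [hx0]
    obtain ⟨c, hc0, hcX, hcx⟩ := hperp X₁ x
    obtain ⟨g, hgd, hg1, hgb, -⟩ := exists_neg_iso X₁ x c hx0 hc0 hcx
      (real_inner_comm x X₁ ▸ hx) hcX
    have h := hinv g hgd hg1 x x x
    rw [hgb] at h
    simp only [map_neg, LinearMap.neg_apply, inner_neg_left, inner_neg_right, neg_neg] at h
    linarith
  -- trilinearity helpers
  have F1 : ∀ a b y z : EuclideanSpace ℝ (Fin n), ⟪K (a + b) y, z⟫ = ⟪K a y, z⟫ + ⟪K b y, z⟫ := by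
    intro a b y z; rw [map_add, LinearMap.add_apply, inner_add_left]
  have F2 : ∀ a y b z : EuclideanSpace ℝ (Fin n), ⟪K a (y + b), z⟫ = ⟪K a y, z⟫ + ⟪K a b, z⟫ := by
    intro a y b z; rw [map_add, inner_add_left]
  have F3 : ∀ a y z b : EuclideanSpace ℝ (Fin n), ⟪K a y, z + b⟫ = ⟪K a y, z⟫ + ⟪K a y, b⟫ := by
    intro a y z b; rw [inner_add_right]
  have Fs1 : ∀ x y z : EuclideanSpace ℝ (Fin n), ⟪K x y, z⟫ = ⟪K y x, z⟫ := by
    intro x y z; rw [hKsym]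
  have Fs2 : ∀ x y z : EuclideanSpace ℝ (Fin n), ⟪K x y, z⟫ = ⟪K x z, y⟫ := hKhsym
  -- cube expansion
  have hcube : ∀ a b : EuclideanSpace ℝ (Fin n), ⟪K (a + b) (a + b), a + b⟫ =
      ⟪K a a, a⟫ + ⟪K b b, b⟫ + 3 * ⟪K a a, b⟫ + 3 * ⟪K a b, b⟫ := by
    intro a b
    have e1 : ⟪K a b, a⟫ = ⟪K a a, b⟫ := Fs2 a b a
    have e2 : ⟪K b a, a⟫ = ⟪K a b, a⟫ := Fs1 b a a
    have e3 : ⟪K b a, b⟫ = ⟪K a b, b⟫ := Fs1 b a b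
    have e4 : ⟪K b b, a⟫ = ⟪K b a, b⟫ := Fs2 b b a
    simp only [F1, F2, F3]
    linarith
  -- Step C : trilinear form vanishes on the orthogonal complement
  have hC : ∀ x y z : EuclideanSpace ℝ (Fin n), ⟪x, X₁⟫ = 0 → ⟪y, X₁⟫ = 0 → ⟪z, X₁⟫ = 0 → ⟪K x y, z⟫ = 0 := by
    intro x y z hx hy hz
    have hxy : ⟪x + y, X₁⟫ = 0 := by rw [inner_add_left, hx, hy]; ring
    have hxz : ⟪x + z, X₁⟫ = 0 := by rw [inner_add_left, hx, hz]; ring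
    have hyz : ⟪y + z, X₁⟫ = 0 := by rw [inner_add_left, hy, hz]; ring
    have hxyz : ⟪x + y + z, X₁⟫ = 0 := by rw [inner_add_left, hxy, hz]; ring
    have q1 := hB x hx
    have q2 := hB y hy
    have q3 := hB z hz
    have q12 := hB (x + y) hxy
    have q13 := hB (x + z) hxz
    have q23 := hB (y + z) hyz
    have q123 := hB (x + y + z) hxyz
    rw [hcube (x + y) z, hcube x y] at q123
    rw [hcube x y] at q12
    rw [hcube x z] at q13
    rw [hcube y z] at q23
    have exp1 : ⟪K (x + y) (x + y), z⟫ =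
        ⟪K x x, z⟫ + 2 * ⟪K x y, z⟫ + ⟪K y y, z⟫ := by
      have := Fs1 y x z
      simp only [F1, F2]
      linarith
    have exp2 : ⟪K (x + y) z, z⟫ = ⟪K x z, z⟫ + ⟪K y z, z⟫ := F1 x y z z
    have s1 : ⟪K x x, z⟫ = ⟪K x z, x⟫ := Fs2 x x z
    have s2 : ⟪K x z, x⟫ = - ⟪K x z, z⟫ ∨ True := Or.inr trivial
    -- from q13 : Qx + Qz + 3⟪K x x, z⟫ + 3⟪K x z, z⟫ = 0
    have hxxz : ⟪K x x, z⟫ = - ⟪K x z, z⟫ := by linarith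
    have hyyz : ⟪K y y, z⟫ = - ⟪K y z, z⟫ := by linarith
    rw [exp1, exp2] at q123
    linarith
  -- the scalar a
  obtain ⟨w0, hw00, hw01, -⟩ := hperp X₁ X₁
  set u₀ : EuclideanSpace ℝ (Fin n) := ‖w0‖⁻¹ • w0 with hu₀
  have hu₀n : ‖u₀‖ = 1 := by
    rw [hu₀, norm_smul, norm_inv, norm_norm]
    field_simp [norm_ne_zero_iff.mpr hw00]
  have hu₀p : ⟪X₁, u₀⟫ = 0 := by
    rw [hu₀, real_inner_smul_right, hw01]; ring
  set a : ℝ := ⟪K X₁ u₀, u₀⟫ with ha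
  -- quadratic form on the complement
  have hEq : ∀ x : EuclideanSpace ℝ (Fin n), ⟪x, X₁⟫ = 0 → ⟪K X₁ x, x⟫ = a * ‖x‖ ^ 2 := by
    intro x hx
    by_cases hx0 : x = 0
    · simp [hx0]
    set u : EuclideanSpace ℝ (Fin n) := ‖x‖ • u₀ with hu
    have hun : ‖u‖ = ‖x‖ := by
      rw [hu, norm_smul, hu₀n, Real.norm_eq_abs, abs_of_nonneg (norm_nonneg x), mul_one]
    have hup : ⟪X₁, u⟫ = 0 := by rw [hu, real_inner_smul_right, hu₀p]; ring
    have huval : ⟪K X₁ u, u⟫ = a * ‖x‖ ^ 2 := by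
      rw [hu, map_smul, real_inner_smul_left, real_inner_smul_right, ← ha]
      ring
    by_cases hxu : x = u
    · rw [hxu, hun]; exact huval
    obtain ⟨w, hwne, hwX, hwu⟩ := hperp X₁ u
    have hx' : ⟪X₁, x⟫ = 0 := by rw [real_inner_comm]; exact hx
    have hsub : ⟪X₁, x - u⟫ = 0 := by
      rw [inner_sub_right, hup, hx']; ring
    obtain ⟨g, hgd, hg1, hgu⟩ := exists_rot_iso X₁ x u w hun.symm hxu hwne hsub hwX hwu
    have h := hinv g hgd hg1 X₁ x x
    rw [hg1, hgu] at h
    rw [← h, huval]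
  -- bilinear form on the complement
  have hbil : ∀ x y : EuclideanSpace ℝ (Fin n), ⟪x, X₁⟫ = 0 → ⟪y, X₁⟫ = 0 → ⟪K X₁ x, y⟫ = a * ⟪x, y⟫ := by
    intro x y hx hy
    have hxy : ⟪x + y, X₁⟫ = 0 := by rw [inner_add_left, hx, hy]; ring
    have h1 := hEq (x + y) hxy
    have h2 := hEq x hx
    have h3 := hEq y hy
    have hcross : ⟪K X₁ y, x⟫ = ⟪K X₁ x, y⟫ := by rw [Fs2 X₁ y x]
    have hexp : ⟪K X₁ (x + y), x + y⟫ =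
        ⟪K X₁ x, x⟫ + 2 * ⟪K X₁ x, y⟫ + ⟪K X₁ y, y⟫ := by
      simp only [F2, F3]
      linarith
    rw [hexp, norm_add_sq_real] at h1
    nlinarith [h1, h2, h3]
  -- value c
  set c : ℝ := ⟪K X₁ X₁, X₁⟫ with hc
  -- trace computation : c + (n-1) a = 0
  have htrace : c + ((n : ℝ) - 1) * a = 0 := by
    have hdim : finrank ℝ (EuclideanSpace ℝ (Fin n)) = n := finrank_euclideanSpace_fin
    have hcard : finrank ℝ (EuclideanSpace ℝ (Fin n)) = Fintype.card (Fin n) := by rw [hdim, Fintype.card_fin]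
    have horth : Orthonormal ℝ (Set.restrict ({0} : Set (Fin n)) (fun _ => X₁ : Fin n → EuclideanSpace ℝ (Fin n))) := by
      constructor
      · intro i; exact hX₁
      · intro i j hij
        exact absurd (Subtype.ext (i.2.trans j.2.symm)) hij
    obtain ⟨b, hb⟩ := horth.exists_orthonormalBasis_extension_of_card_eq hcard
    have hb0 : b 0 = X₁ := hb 0 rfl
    have htr := hKtraceless X₁
    rw [LinearMap.trace_eq_matrix_trace ℝ b.toBasis] at htr
    have hmat : ∀ i, (LinearMap.toMatrix b.toBasis b.toBasis (K X₁)) i i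
        = ⟪b i, K X₁ (b i)⟫ := by
      intro i
      rw [LinearMap.toMatrix_apply, OrthonormalBasis.coe_toBasis_repr_apply,
        OrthonormalBasis.repr_apply_apply, OrthonormalBasis.coe_toBasis]
    rw [Matrix.trace] at htr
    simp only [Matrix.diag, hmat] at htr
    have hterm : ∀ i : Fin n, i ≠ 0 → ⟪b i, K X₁ (b i)⟫ = a := by
      intro i hi
      have hbi : ⟪b i, X₁⟫ = 0 := by
        rw [← hb0]; exact b.orthonormal.2 hi
      have hnorm : ⟪b i, b i⟫ = 1 := by
        rw [real_inner_self_eq_norm_sq, b.orthonormal.1 i]; norm_num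
      rw [real_inner_comm, hbil (b i) (b i) hbi hbi, hnorm, mul_one]
    have h0 : ⟪b 0, K X₁ (b 0)⟫ = c := by
      rw [hb0, hc, real_inner_comm]
    have hsplit := Finset.add_sum_erase Finset.univ
      (fun i => ⟪b i, K X₁ (b i)⟫) (Finset.mem_univ (0 : Fin n))
    rw [← hsplit] at htr
    try simp only at htr
    have hrest : ∑ i ∈ Finset.univ.erase (0 : Fin n), ⟪b i, K X₁ (b i)⟫
        = ((n : ℝ) - 1) * a := by
      rw [Finset.sum_congr rfl (fun i hi => hterm i (Finset.ne_of_mem_erase hi)),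
        Finset.sum_const, Finset.card_erase_of_mem (Finset.mem_univ _), Finset.card_univ,
        Fintype.card_fin, nsmul_eq_mul]
      have : ((n - 1 : ℕ) : ℝ) = (n : ℝ) - 1 := by
        rw [Nat.cast_sub (by omega), Nat.cast_one]
      rw [this]
    rw [h0, hrest] at htr
    exact htr
  refine ⟨-a, ?_, ?_, ?_⟩
  · -- K X₁ X₁ = ((n-1) * (-a)) • X₁
    have : K X₁ X₁ - (((n : ℝ) - 1) * (-a)) • X₁ = 0 := by
      apply hext
      · intro Z hZ
        rw [inner_sub_left, hA Z hZ, real_inner_smul_left, real_inner_comm Z X₁,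
          hZ]
        ring
      · rw [inner_sub_left, real_inner_smul_left, hX11, ← hc]
        linarith
    have h := sub_eq_zero.mp this
    rw [h]
  · intro X hX
    have : K X₁ X - (- -a) • X = 0 := by
      apply hext
      · intro Z hZ
        rw [inner_sub_left, hbil X Z hX hZ, real_inner_smul_left]
        ring
      · rw [inner_sub_left, real_inner_smul_left, hKhsym X₁ X X₁,
          hA X hX, hX]
        ring
    have h := sub_eq_zero.mp this
    rw [h]
  · intro X Y hX hY
    have : K X Y - (- -a * ⟪X, Y⟫) • X₁ = 0 := by
      apply hext
      · intro Z hZ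
        rw [inner_sub_left, hC X Y Z hX hY hZ, real_inner_smul_left,
          real_inner_comm Z X₁, hZ]
        ring
      · rw [inner_sub_left, real_inner_smul_left, hX11, hKhsym X Y X₁, hKsym X X₁,
          hbil X Y hX hY]
        ring
    have h := sub_eq_zero.mp this
    rw [h]
end

section
/- Suppose smooth real functions a, b, r, σ of one variable t satisfy b' = (a−b)(σ−r), r' = −((a−b)/2 + (n+1)σr), and σ' = −((a+b)/2 + n r² + σ²), where n ≥ 3. Then the quantity ζ = b − r² + σ² satisfies ζ' = −2σζ. Consequently, if f is any function with f' = σ, then e^{2f} ζ is constant. -/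
/-- Under the structure ODEs, `ζ = b − r² + σ²` satisfies
`ζ' = −2σζ`, hence `e^{2f} ζ` is constant whenever `f' = σ`. -/
theorem stmt5 (n : ℕ) (hn : 3 ≤ n) (a b r σ : ℝ → ℝ)
    (hb : ∀ t, HasDerivAt b ((a t - b t) * (σ t - r t)) t)
    (hr : ∀ t, HasDerivAt r (-((a t - b t) / 2 + ((n : ℝ) + 1) * σ t * r t)) t)
    (hσ : ∀ t, HasDerivAt σ (-((a t + b t) / 2 + (n : ℝ) * r t ^ 2 + σ t ^ 2)) t)
    (ζ : ℝ → ℝ) (hζ : ∀ t, ζ t = b t - r t ^ 2 + σ t ^ 2) :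
    (∀ t, HasDerivAt ζ (-2 * σ t * ζ t) t) ∧
    (∀ f : ℝ → ℝ, (∀ t, HasDerivAt f (σ t) t) →
      ∀ s t : ℝ, Real.exp (2 * f s) * ζ s = Real.exp (2 * f t) * ζ t) := by
  have hζ' : ∀ t, HasDerivAt ζ (-2 * σ t * ζ t) t := by
    intro t
    have h : HasDerivAt (fun t => b t - r t ^ 2 + σ t ^ 2)
        ((a t - b t) * (σ t - r t)
          - 2 * r t * (-((a t - b t) / 2 + ((n : ℝ) + 1) * σ t * r t))
          + 2 * σ t * (-((a t + b t) / 2 + (n : ℝ) * r t ^ 2 + σ t ^ 2))) t := by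
      have h1 := ((hb t).sub (((hr t).pow 2))).add ((hσ t).pow 2)
      convert h1 using 1 <;> first | rfl | (funext x; simp) | (push_cast; ring)
    have hfun : ζ = fun t => b t - r t ^ 2 + σ t ^ 2 := funext hζ
    rw [hfun]
    convert h using 1
    simp only []
    ring
  refine ⟨hζ', fun f hf s t => ?_⟩
  have key : ∀ u, HasDerivAt (fun x => Real.exp (2 * f x) * ζ x) 0 u := by
    intro u
    have he : HasDerivAt (fun x => Real.exp (2 * f x)) (Real.exp (2 * f u) * (2 * σ u)) u := by
      exact ((hf u).const_mul 2).exp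
    have := he.mul (hζ' u)
    convert this using 1 <;> first | rfl | (push_cast; ring)
  have : (fun x => Real.exp (2 * f x) * ζ x) s = (fun x => Real.exp (2 * f x) * ζ x) t := by
    have hc : ∀ x : ℝ, deriv (fun x => Real.exp (2 * f x) * ζ x) x = 0 :=
      fun x => (key x).deriv
    have := is_const_of_deriv_eq_zero (f := fun x => Real.exp (2 * f x) * ζ x)
      (fun x => (key x).differentiableAt) hc s t
    exact this
  simpa using this
end

section
/- Let γ = (γ₁, γ₂) : I → ℝ² be a smooth curve with γ₁(t) = e^{at}, γ₂(t) = e^{bt} for nonzero constants a, b with a ≠ b. Then the expression (γ₁')^{n+2} γ₁^{n−1} / [ (γ₂')^{n−1} (γ₁'' γ₂' − γ₂'' γ₁') ] is constant in t if and only if b = 2a. -/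
/-- For γ = (e^{at}, e^{bt}), the improper affine sphere ratio
(γ₁')^{n+2} γ₁^{n−1} / [(γ₂')^{n−1}(γ₁''γ₂' − γ₂''γ₁')] is constant iff b = 2a. -/
theorem stmt7 (n : ℕ) (hn : 2 ≤ n) (a b : ℝ) (ha : a ≠ 0) (hb : b ≠ 0) (hab : a ≠ b)
    (γ₁ γ₂ : ℝ → ℝ) (hγ₁ : γ₁ = fun t => Real.exp (a * t))
    (hγ₂ : γ₂ = fun t => Real.exp (b * t)) :
    (∀ s t : ℝ,
      (deriv γ₁ s) ^ (n + 2) * (γ₁ s) ^ (n - 1) /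
        ((deriv γ₂ s) ^ (n - 1) *
          (deriv (deriv γ₁) s * deriv γ₂ s - deriv (deriv γ₂) s * deriv γ₁ s))
      = (deriv γ₁ t) ^ (n + 2) * (γ₁ t) ^ (n - 1) /
        ((deriv γ₂ t) ^ (n - 1) *
          (deriv (deriv γ₁) t * deriv γ₂ t - deriv (deriv γ₂) t * deriv γ₁ t)))
    ↔ b = 2 * a := by
  subst hγ₁ hγ₂
  obtain ⟨m, rfl⟩ : ∃ m, n = m + 2 := ⟨n - 2, by omega⟩
  have H0 : ∀ (c t : ℝ), HasDerivAt (fun t => Real.exp (c * t)) (c * Real.exp (c * t)) t := by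
    intro c t
    simpa [mul_comm, Function.comp_def] using (Real.hasDerivAt_exp (c * t)).comp t ((hasDerivAt_id t).const_mul c)
  have d : ∀ c : ℝ, deriv (fun t => Real.exp (c * t)) = fun t => c * Real.exp (c * t) := by
    intro c; funext t; exact (H0 c t).deriv
  have dd : ∀ c : ℝ,
      deriv (deriv (fun t => Real.exp (c * t))) = fun t => c * (c * Real.exp (c * t)) := by
    intro c; rw [d c]; funext t; exact ((H0 c t).const_mul c).deriv
  have hab' : a - b ≠ 0 := sub_ne_zero.mpr hab
  set K : ℝ := a ^ (m + 3) / (b ^ (m + 2) * (a - b)) with hK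
  have hKne : K ≠ 0 := div_ne_zero (pow_ne_zero _ ha) (mul_ne_zero (pow_ne_zero _ hb) hab')
  have key : ∀ t : ℝ,
      (deriv (fun t => Real.exp (a * t)) t) ^ (m + 2 + 2) *
          ((fun t => Real.exp (a * t)) t) ^ (m + 2 - 1) /
        ((deriv (fun t => Real.exp (b * t)) t) ^ (m + 2 - 1) *
          (deriv (deriv (fun t => Real.exp (a * t))) t * deriv (fun t => Real.exp (b * t)) t -
            deriv (deriv (fun t => Real.exp (b * t))) t * deriv (fun t => Real.exp (a * t)) t))
      = K * Real.exp ((2 * a - b) * t) ^ (m + 2) := by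
    intro t
    simp only [dd]
    simp only [d]
    set x := Real.exp (a * t) with hx
    set y := Real.exp (b * t) with hy
    have hxne : x ≠ 0 := Real.exp_ne_zero _
    have hyne : y ≠ 0 := Real.exp_ne_zero _
    have hxy : Real.exp ((2 * a - b) * t) = x ^ 2 / y := by
      rw [hx, hy, ← Real.exp_nat_mul, ← Real.exp_sub]
      ring_nf
    have hbr : a * (a * x) * (b * y) - b * (b * y) * (a * x) = a * b * (a - b) * (x * y) := by
      ring
    show (a * x) ^ (m + 2 + 2) * x ^ (m + 2 - 1) /
        ((b * y) ^ (m + 2 - 1) * (a * (a * x) * (b * y) - b * (b * y) * (a * x)))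
      = K * Real.exp ((2 * a - b) * t) ^ (m + 2)
    rw [hbr, hxy, hK]
    have h1 : m + 2 - 1 = m + 1 := rfl
    rw [h1]
    field_simp
    rw [div_pow]
    field_simp
    ring
  constructor
  · intro h
    have h1 := h 1 0
    rw [key 1, key 0] at h1
    have h2 : Real.exp ((2 * a - b) * 1) ^ (m + 2) = Real.exp ((2 * a - b) * 0) ^ (m + 2) :=
      mul_left_cancel₀ hKne h1
    rw [mul_zero, Real.exp_zero, one_pow, ← Real.exp_nat_mul] at h2
    have h3 : ((m + 2 : ℕ) : ℝ) * ((2 * a - b) * 1) = 0 :=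
      Real.exp_injective (by simpa using h2)
    have hm : ((m : ℝ) + 2) ≠ 0 := by positivity
    have : (2 * a - b) = 0 := by
      push_cast at h3
      rcases mul_eq_zero.mp h3 with h | h
      · exact absurd h hm
      · linarith
    linarith
  · intro h
    subst h
    intro s t
    rw [key s, key t]
    simp
end

section
/- Let γ(t) = (e^{at}, e^{bt}) with a, b nonzero and a ≠ b. Then c (γ₂'γ₁ − γ₁'γ₂)^{n+2} γ₁^{n−1} = (γ₂')^{n−1} (γ₁''γ₂' − γ₂''γ₁') holds for a constant c ≠ 0 if and only if b = −n a, in which case c = −a b^n / (b−a)^{n+1}. -/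
lemma dexp (a : ℝ) : deriv (fun t => Real.exp (a*t)) = fun t => a * Real.exp (a*t) := by
  funext t
  have h : HasDerivAt (fun t : ℝ => Real.exp (a*t)) (Real.exp (a*t) * a) t := by
    simpa using ((hasDerivAt_id t).const_mul a).exp
  simpa [mul_comm] using h.deriv

lemma dexp2 (a : ℝ) : deriv (fun t => a * Real.exp (a*t)) = fun t => a * a * Real.exp (a*t) := by
  funext t
  have h : HasDerivAt (fun t : ℝ => a * Real.exp (a*t)) (a * (Real.exp (a*t) * a)) t := by
    simpa using (((hasDerivAt_id t).const_mul a).exp).const_mul a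
  simpa [mul_comm, mul_assoc] using h.deriv

lemma key_id (m : ℕ) (a b : ℝ) (ha : a ≠ 0) (hb : b ≠ 0) (hab : a ≠ b)
    (hba : b = -((m : ℝ) + 2) * a) (t : ℝ) :
    (-a * b ^ (m+2) / (b - a) ^ (m+3)) *
        (b * Real.exp (b*t) * Real.exp (a*t) - a * Real.exp (a*t) * Real.exp (b*t)) ^ (m+4) *
        (Real.exp (a*t)) ^ (m+1)
      = (b * Real.exp (b*t)) ^ (m+1) *
        (a * a * Real.exp (a*t) * (b * Real.exp (b*t)) -
          b * b * Real.exp (b*t) * (a * Real.exp (a*t))) := by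
  have hx : Real.exp (a*t) ≠ 0 := Real.exp_ne_zero _
  have hba' : b - a ≠ 0 := sub_ne_zero.mpr fun h => hab h.symm
  have hy : Real.exp (b*t) = (Real.exp (a*t) ^ (m+2))⁻¹ := by
    rw [← Real.exp_nat_mul, ← Real.exp_neg]
    congr 1
    rw [hba]; push_cast; ring
  have hrw : (b * Real.exp (b*t) * Real.exp (a*t) - a * Real.exp (a*t) * Real.exp (b*t))
      = (b - a) * (Real.exp (a*t) * Real.exp (b*t)) := by ring
  rw [hrw, mul_pow, mul_pow, hy]
  field_simp
  simp only [div_pow, one_pow, ← pow_mul]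
  field_simp
  ring

/-- For γ = (e^{at}, e^{bt}), the proper affine sphere condition
c (γ₂'γ₁ − γ₁'γ₂)^{n+2} γ₁^{n−1} = (γ₂')^{n−1}(γ₁''γ₂' − γ₂''γ₁') holds for some
constant c ≠ 0 iff b = −na, and then c = −a bⁿ/(b−a)^{n+1}. -/
theorem stmt8 (n : ℕ) (hn : 2 ≤ n) (a b : ℝ) (ha : a ≠ 0) (hb : b ≠ 0) (hab : a ≠ b)
    (γ₁ γ₂ : ℝ → ℝ) (hγ₁ : γ₁ = fun t => Real.exp (a * t))
    (hγ₂ : γ₂ = fun t => Real.exp (b * t)) :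
    ((∃ c : ℝ, c ≠ 0 ∧ ∀ t : ℝ,
      c * (deriv γ₂ t * γ₁ t - deriv γ₁ t * γ₂ t) ^ (n + 2) * (γ₁ t) ^ (n - 1)
        = (deriv γ₂ t) ^ (n - 1) *
          (deriv (deriv γ₁) t * deriv γ₂ t - deriv (deriv γ₂) t * deriv γ₁ t))
      ↔ b = -(n : ℝ) * a) ∧
    (∀ c : ℝ, c ≠ 0 →
      (∀ t : ℝ,
        c * (deriv γ₂ t * γ₁ t - deriv γ₁ t * γ₂ t) ^ (n + 2) * (γ₁ t) ^ (n - 1)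
          = (deriv γ₂ t) ^ (n - 1) *
            (deriv (deriv γ₁) t * deriv γ₂ t - deriv (deriv γ₂) t * deriv γ₁ t)) →
      c = -a * b ^ n / (b - a) ^ (n + 1)) := by
  obtain ⟨m, rfl⟩ : ∃ m, n = m + 2 := ⟨n - 2, by omega⟩
  subst hγ₁ hγ₂
  simp only [dexp, dexp2]
  simp only [show m + 2 - 1 = m + 1 from rfl, show m + 2 + 2 = m + 4 from rfl]
  have hba' : b - a ≠ 0 := sub_ne_zero.mpr fun h => hab h.symm
  have hM : a * b * (a - b) * b ^ (m+1) ≠ 0 := by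
    apply mul_ne_zero; apply mul_ne_zero; apply mul_ne_zero ha hb
    · exact sub_ne_zero.mpr hab
    · exact pow_ne_zero _ hb
  -- from the equation at t = 0, extract the constant relation
  have hKey : ∀ c : ℝ,
      (∀ t : ℝ, c * (b * Real.exp (b*t) * Real.exp (a*t) - a * Real.exp (a*t) * Real.exp (b*t)) ^ (m+4) * (Real.exp (a*t)) ^ (m+1)
        = (b * Real.exp (b*t)) ^ (m+1) * (a * a * Real.exp (a*t) * (b * Real.exp (b*t)) - b * b * Real.exp (b*t) * (a * Real.exp (a*t)))) →
      c * (b - a) ^ (m+4) = a * b * (a - b) * b ^ (m+1) := by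
    intro c hc
    have h0 := hc 0
    simp only [mul_zero, Real.exp_zero, mul_one, one_pow] at h0
    linear_combination h0
  constructor
  · constructor
    · rintro ⟨c, hc, heq⟩
      have hK := hKey c heq
      have h1 := heq 1
      simp only [mul_one] at h1
      set X := Real.exp a with hX
      set Y := Real.exp b with hY
      have hXne : X ≠ 0 := Real.exp_ne_zero _
      have hYne : Y ≠ 0 := Real.exp_ne_zero _
      have hrw : b * Y * X - a * X * Y = (b - a) * (X * Y) := by ring
      rw [hrw, mul_pow] at h1
      have h2 : a * b * (a - b) * b ^ (m+1) * (X ^ (m+4) * Y ^ (m+4) * X ^ (m+1))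
          = a * b * (a - b) * b ^ (m+1) * (X * Y ^ (m+2)) := by
        linear_combination h1 - (X ^ (m+4) * Y ^ (m+4) * X ^ (m+1)) * hK
      have h3 := mul_left_cancel₀ hM h2
      have h4 : X ^ (2*m+4) * Y ^ 2 * (X * Y ^ (m+2)) = 1 * (X * Y ^ (m+2)) := by
        linear_combination h3
      have h5 : X ^ (2*m+4) * Y ^ 2 = 1 :=
        mul_right_cancel₀ (mul_ne_zero hXne (pow_ne_zero _ hYne)) h4
      have h6 : Real.exp ((2*m+4) * a + 2 * b) = 1 := by
        rw [Real.exp_add]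
        rw [show ((2*m+4 : ℝ) * a) = ((2*m+4 : ℕ) : ℝ) * a by push_cast; ring,
          show ((2 : ℝ) * b) = ((2 : ℕ) : ℝ) * b by push_cast; ring,
          Real.exp_nat_mul, Real.exp_nat_mul]
        exact h5
      have h7 : (2*(m:ℝ)+4) * a + 2 * b = 0 := Real.exp_injective (h6.trans Real.exp_zero.symm)
      push_cast
      linarith
    · intro hba
      refine ⟨-a * b ^ (m+2) / (b - a) ^ (m+3), ?_, ?_⟩
      · exact div_ne_zero (mul_ne_zero (neg_ne_zero.mpr ha) (pow_ne_zero _ hb)) (pow_ne_zero _ hba')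
      · intro t
        exact key_id m a b ha hb hab (by push_cast at hba ⊢; linarith) t
  · intro c hc heq
    have hK := hKey c heq
    rw [eq_div_iff (pow_ne_zero _ hba')]
    have : (c * (b - a) ^ (m+3)) * (b - a) = (-a * b ^ (m+2)) * (b - a) := by
      linear_combination hK
    exact mul_right_cancel₀ hba' this
end

section
/- Let γ(t) = (e^{at}, e^{bt}) with a, b nonzero and a ≠ b. Then the quantity (γ₁'γ₂ − γ₂'γ₁)^{n+2} γ₁^{n−1} / [ (γ₁')^{n−1}(γ₂''γ₁' − γ₁''γ₂') ] is constant in t if and only if b = −a. -/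
lemma expDeriv1 (a : ℝ) (t : ℝ) :
    HasDerivAt (fun t => Real.exp (a * t)) (a * Real.exp (a * t)) t := by
  have h : HasDerivAt (fun t : ℝ => a * t) a t := by
    simpa using (hasDerivAt_id t).const_mul a
  exact (Real.hasDerivAt_exp (a * t)).comp t h |>.congr_deriv (by ring)

lemma deriv_exp_mul (a : ℝ) :
    deriv (fun t => Real.exp (a * t)) = fun t => a * Real.exp (a * t) := by
  funext t; exact (expDeriv1 a t).deriv

lemma deriv_mul_exp (a : ℝ) :
    deriv (fun t => a * Real.exp (a * t)) = fun t => a * (a * Real.exp (a * t)) := by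
  funext t
  exact ((expDeriv1 a t).const_mul a).deriv

/-- closed form of the ratio -/
lemma key (n : ℕ) (a b : ℝ) (ha : a ≠ 0) (hb : b ≠ 0) (hab : a ≠ b) (t : ℝ) :
    (a * Real.exp (a*t) * Real.exp (b*t) - b * Real.exp (b*t) * Real.exp (a*t)) ^ (n + 2)
      * (Real.exp (a*t)) ^ (n - 1) /
      ((a * Real.exp (a*t)) ^ (n - 1) *
        (b * (b * Real.exp (b*t)) * (a * Real.exp (a*t))
          - a * (a * Real.exp (a*t)) * (b * Real.exp (b*t))))
    = ((a - b) ^ (n + 2) / (a ^ (n - 1) * (a * b * (b - a)))) *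
        (Real.exp ((a + b) * t)) ^ (n + 1) := by
  have hu : Real.exp (a*t) ≠ 0 := Real.exp_ne_zero _
  have hv : Real.exp (b*t) ≠ 0 := Real.exp_ne_zero _
  have hba : b - a ≠ 0 := sub_ne_zero.mpr (Ne.symm hab)
  have hX : Real.exp ((a + b) * t) = Real.exp (a*t) * Real.exp (b*t) := by
    rw [← Real.exp_add]; ring_nf
  have hden : b * (b * Real.exp (b*t)) * (a * Real.exp (a*t))
      - a * (a * Real.exp (a*t)) * (b * Real.exp (b*t))
      = (a * b * (b - a)) * (Real.exp (a*t) * Real.exp (b*t)) := by ring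
  have hnum : a * Real.exp (a*t) * Real.exp (b*t) - b * Real.exp (b*t) * Real.exp (a*t)
      = (a - b) * (Real.exp (a*t) * Real.exp (b*t)) := by ring
  rw [hX, hden, hnum, mul_pow (a - b) (Real.exp (a*t) * Real.exp (b*t)) (n+2)]
  have h1 : (a : ℝ) * b * (b - a) ≠ 0 := by
    exact mul_ne_zero (mul_ne_zero ha hb) hba
  rw [mul_pow a (Real.exp (a*t)) (n-1), div_mul_eq_mul_div, div_eq_div_iff
    (mul_ne_zero (mul_ne_zero (pow_ne_zero _ ha) (pow_ne_zero _ hu)) (mul_ne_zero h1 (mul_ne_zero hu hv)))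
    (mul_ne_zero (pow_ne_zero _ ha) h1)]
  ring

/-- For γ = (e^{at}, e^{bt}), the ratio
(γ₁'γ₂ − γ₂'γ₁)^{n+2} γ₁^{n−1} / [(γ₁')^{n−1}(γ₂''γ₁' − γ₁''γ₂')]
is constant in t iff b = −a. -/
theorem stmt9 (n : ℕ) (hn : 2 ≤ n) (a b : ℝ) (ha : a ≠ 0) (hb : b ≠ 0) (hab : a ≠ b)
    (γ₁ γ₂ : ℝ → ℝ) (hγ₁ : γ₁ = fun t => Real.exp (a * t))
    (hγ₂ : γ₂ = fun t => Real.exp (b * t)) :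
    (∀ s t : ℝ,
      (deriv γ₁ s * γ₂ s - deriv γ₂ s * γ₁ s) ^ (n + 2) * (γ₁ s) ^ (n - 1) /
        ((deriv γ₁ s) ^ (n - 1) *
          (deriv (deriv γ₂) s * deriv γ₁ s - deriv (deriv γ₁) s * deriv γ₂ s))
      = (deriv γ₁ t * γ₂ t - deriv γ₂ t * γ₁ t) ^ (n + 2) * (γ₁ t) ^ (n - 1) /
        ((deriv γ₁ t) ^ (n - 1) *
          (deriv (deriv γ₂) t * deriv γ₁ t - deriv (deriv γ₁) t * deriv γ₂ t)))
    ↔ b = -a := by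
  subst hγ₁ hγ₂
  simp only [deriv_exp_mul, deriv_mul_exp]
  have hk : ∀ t : ℝ,
      (a * Real.exp (a*t) * Real.exp (b*t) - b * Real.exp (b*t) * Real.exp (a*t)) ^ (n + 2)
        * (Real.exp (a*t)) ^ (n - 1) /
        ((a * Real.exp (a*t)) ^ (n - 1) *
          (b * (b * Real.exp (b*t)) * (a * Real.exp (a*t))
            - a * (a * Real.exp (a*t)) * (b * Real.exp (b*t))))
      = ((a - b) ^ (n + 2) / (a ^ (n - 1) * (a * b * (b - a)))) *
          (Real.exp ((a + b) * t)) ^ (n + 1) := key n a b ha hb hab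
  constructor
  · intro h
    have h1 := h 1 0
    rw [hk 1, hk 0] at h1
    have hK : ((a - b) ^ (n + 2) / (a ^ (n - 1) * (a * b * (b - a)))) ≠ 0 := by
      have hba : b - a ≠ 0 := sub_ne_zero.mpr (Ne.symm hab)
      have hab' : a - b ≠ 0 := sub_ne_zero.mpr hab
      positivity
    have h2 : (Real.exp ((a + b) * 1)) ^ (n + 1) = (Real.exp ((a + b) * 0)) ^ (n + 1) :=
      mul_left_cancel₀ hK h1
    rw [← Real.exp_nat_mul, ← Real.exp_nat_mul] at h2
    have h3 := Real.exp_injective h2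
    simp only [mul_zero, mul_one] at h3
    have hn1 : (n : ℝ) + 1 ≠ 0 := by positivity
    have hab0 : a + b = 0 := by
      rcases mul_eq_zero.mp h3 with h' | h'
      · exact absurd h' (by push_cast; positivity)
      · exact h'
    linarith
  · intro h
    intro s t
    rw [hk s, hk t, h]
    ring_nf
end
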